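/- Let G be a (hole, dart)-free graph that is an atom (has no clique cutset). Then for every vertex v and every k ≥ 7, the subgraph induced on the anti-neighborhood A(v) contains no induced complement of C_k. -/

import Mathlib

open SimpleGraph

/-- The dart: vertices a,b,c,d,e = 0,1,2,3,4; edges ab, ac, ad, bd, cd, de. -/
def dartGraph : SimpleGraph (Fin 5) :=
  SimpleGraph.fromEdgeSet {s(0,1), s(0,2), s(0,3), s(1,3), s(2,3), s(3,4)}

/-- The bull: vertices a,b,c,d,e = 0,1,2,3,4; edges ab, bc, cd, be, ce. -/
def bullGraph : SimpleGraph (Fin 5) :=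
  SimpleGraph.fromEdgeSet {s(0,1), s(1,2), s(2,3), s(1,4), s(2,4)}

/-- The house: C4 on v1..v4 = 0..3 plus v5 = 4 adjacent to v2 = 1 and v3 = 2. -/
def houseGraph : SimpleGraph (Fin 5) :=
  SimpleGraph.fromEdgeSet {s(0,1), s(1,2), s(2,3), s(3,0), s(4,1), s(4,2)}

/-- Anti-neighborhood of a vertex: all vertices distinct from and nonadjacent to `v`. -/
def vertexAnti {V : Type*} (G : SimpleGraph V) (v : V) : Set V :=
  {u | u ≠ v ∧ ¬ G.Adj v u}

/-- Anti-neighborhood of a set `S`: vertices outside `S` with no neighbor in `S`. -/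
def antiNbhd {V : Type*} (G : SimpleGraph V) (S : Set V) : Set V :=
  {v | v ∉ S ∧ ∀ u ∈ S, ¬ G.Adj v u}

/-- Contact vertices of `S`: outside `S`, with a neighbor in `S` and a neighbor in `antiNbhd G S`. -/
def contactSet {V : Type*} (G : SimpleGraph V) (S : Set V) : Set V :=
  {v | v ∉ S ∧ (∃ u ∈ S, G.Adj v u) ∧ ∃ w ∈ antiNbhd G S, G.Adj v w}

/-- `G` has a clique cutset: a clique whose removal disconnects the graph. -/
def HasCliqueCutset {V : Type*} (G : SimpleGraph V) : Prop :=
  ∃ C : Set V, G.IsClique C ∧ ¬ (G.induce Cᶜ).Preconnected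

/-- `U` is a module: no outside vertex distinguishes two vertices of `U`. -/
def IsModule {V : Type*} (G : SimpleGraph V) (U : Set V) : Prop :=
  ∀ z ∉ U, (∀ x ∈ U, G.Adj z x) ∨ (∀ x ∈ U, ¬ G.Adj z x)

/-- `G` is prime: all its modules are trivial. -/
def IsPrime {V : Type*} (G : SimpleGraph V) : Prop :=
  ∀ U : Set V, IsModule G U → U = ∅ ∨ (∃ x, U = {x}) ∨ U = Set.univ

/-- `G` is perfect: every induced subgraph has chromatic number equal to clique number. -/
def IsPerfect {V : Type*} (G : SimpleGraph V) : Prop :=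
  ∀ s : Set V, (G.induce s).chromaticNumber = ((G.induce s).cliqueNum : ℕ∞)

/-- Distance from a vertex to a set of vertices. -/
noncomputable def setDist {V : Type*} (G : SimpleGraph V) (v : V) (S : Set V) : ℕ :=
  sInf {n | ∃ u ∈ S, n = G.dist v u}

namespace S5
variable {V : Type*} {G : SimpleGraph V}


lemma mod_two_cases (m k : ℕ) (h : m < 2*k) :
    (m < k ∧ m % k = m) ∨ (k ≤ m ∧ m % k = m - k) := by
  rcases Nat.lt_or_ge m k with h' | h'
  · exact Or.inl ⟨h', Nat.mod_eq_of_lt h'⟩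
  · refine Or.inr ⟨h', ?_⟩
    rw [Nat.mod_eq_sub_mod h', Nat.mod_eq_of_lt (by omega)]

lemma cycAdj {n : ℕ} (hn : 2 ≤ n) (u v : Fin n) :
    (cycleGraph n).Adj u v ↔ ((u.val + 1) % n = v.val ∨ (v.val + 1) % n = u.val) := by
  obtain ⟨m, rfl⟩ : ∃ m, n = m + 2 := ⟨n - 2, by omega⟩
  rw [cycleGraph_adj]
  have h1 : ∀ a b : Fin (m+2), (a - b = 1) ↔ ((b.val + 1) % (m+2) = a.val) := by
    intro a b
    rw [Fin.ext_iff, Fin.sub_def, Fin.val_one]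
    have ha := a.isLt; have hb := b.isLt
    show (m + 2 - b.val + a.val) % (m+2) = 1 ↔ _
    have c1 := mod_two_cases (m + 2 - b.val + a.val) (m+2) (by omega)
    have c2 := mod_two_cases (b.val + 1) (m+2) (by omega)
    omega
  rw [h1, h1]
  exact Or.comm


lemma mkDart (hdart : IsEmpty (dartGraph ↪g G)) {a b c d e : V}
    (hab : G.Adj a b) (hac : G.Adj a c) (had : G.Adj a d) (hbd : G.Adj b d)
    (hcd : G.Adj c d) (hde : G.Adj d e)
    (hbc : ¬ G.Adj b c) (hae : ¬ G.Adj a e) (hbe : ¬ G.Adj b e) (hce : ¬ G.Adj c e)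
    (nbc : b ≠ c) (nae : a ≠ e) (nbe : b ≠ e) (nce : c ≠ e) : False := by
  have nab := G.ne_of_adj hab
  have nac := G.ne_of_adj hac
  have nad := G.ne_of_adj had
  have nbd := G.ne_of_adj hbd
  have ncd := G.ne_of_adj hcd
  have nde := G.ne_of_adj hde
  refine hdart.elim' ⟨⟨![a,b,c,d,e], ?_⟩, ?_⟩
  · intro i j hij
    fin_cases i <;> fin_cases j <;> simp_all <;>
      first
        | rfl
        | (exact absurd hij (by assumption))
        | (exact absurd hij.symm (by assumption))
  · intro i j
    fin_cases i <;> fin_cases j <;>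
      simp [dartGraph, SimpleGraph.fromEdgeSet_adj, Sym2.eq, Sym2.rel_iff] <;>
      first
        | (exact fun h => (G.irrefl h).elim)
        | assumption
        | (intro h; first | exact absurd h (by assumption) | exact absurd h.symm (by assumption))
        | (exact (by assumption : G.Adj _ _).symm)

lemma mkCycle (hhole : ∀ k : ℕ, 5 ≤ k → IsEmpty (cycleGraph k ↪g G))
    {n : ℕ} (hn : 5 ≤ n) (f : ℕ → V)
    (hinj : ∀ i, i < n → ∀ j, j < n → f i = f j → i = j)
    (hadj : ∀ i, i < n → ∀ j, j < n →
      (G.Adj (f i) (f j) ↔ ((i+1) % n = j ∨ (j+1) % n = i))) : False := by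
  refine (hhole n hn).elim' ⟨⟨fun i => f i.val, ?_⟩, ?_⟩
  · intro i j hij
    exact Fin.ext (hinj i.val i.isLt j.val j.isLt hij)
  · intro i j
    show G.Adj (f i.val) (f j.val) ↔ (cycleGraph n).Adj i j
    rw [hadj i.val i.isLt j.val j.isLt, cycAdj (by omega)]



/-- reachable from v0 within A -/
def InA (G : SimpleGraph V) (A : Set V) (v0 y : V) : Prop :=
  ∃ p : G.Walk v0 y, ∀ z ∈ p.support, z ∈ A

lemma InA.mem {A : Set V} {v0 y : V} (h : InA G A v0 y) : y ∈ A := by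
  obtain ⟨p, hp⟩ := h
  exact hp y p.end_mem_support

lemma exit {A : Set V} {v0 : V} :
    ∀ {a t : V} (p : G.Walk a t), InA G A v0 a → t ∉ A →
      ∃ u w, InA G A v0 w ∧ G.Adj w u ∧ u ∉ A ∧ u ∈ p.support := by
  intro a t p
  induction p with
  | nil => intro ha ht; exact absurd ha.mem ht
  | @cons a b t h q ih =>
    intro ha ht
    by_cases hb : b ∈ A
    · have hIb : InA G A v0 b := by
        obtain ⟨p0, hp0⟩ := ha
        refine ⟨p0.concat h, ?_⟩
        intro z hz
        rw [Walk.support_concat, List.mem_append] at hz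
        rcases hz with hz | hz
        · exact hp0 z hz
        · simp at hz; subst hz; exact hb
      obtain ⟨u, w, h1, h2, h3, h4⟩ := ih hIb ht
      exact ⟨u, w, h1, h2, h3, by simp [Walk.support_cons, h4]⟩
    · exact ⟨b, a, ha, h, hb, by simp [Walk.support_cons]⟩

lemma walk_out {s : Set V} {a b : s} (h : (G.induce s).Reachable a b) :
    ∃ p : G.Walk a.val b.val, ∀ z ∈ p.support, z ∈ s := by
  obtain ⟨q⟩ := h
  induction q with
  | nil => exact ⟨Walk.nil, by simp [Subtype.coe_prop]⟩
  | @cons a c t h q ih =>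
    obtain ⟨p, hp⟩ := ih
    have hadj : G.Adj a.val c.val := h
    refine ⟨Walk.cons hadj p, ?_⟩
    intro z hz
    rw [Walk.support_cons, List.mem_cons] at hz
    rcases hz with hz | hz
    · subst hz; exact a.coe_prop
    · exact hp z hz

/-- chains -/
def IsChn (G : SimpleGraph V) (u1 u2 : V) (A : Set V) (n : ℕ) (f : ℕ → V) : Prop :=
  f 0 = u1 ∧ f n = u2 ∧ (∀ i, i < n → G.Adj (f i) (f (i+1))) ∧
    (∀ i, 0 < i → i < n → f i ∈ A)

lemma chain_of_walk {A : Set V} :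
    ∀ {a b : V} (p : G.Walk a b), (∀ z ∈ p.support, z ∈ A) →
      ∃ n f, IsChn G a b A n f ∧ (∀ i, i ≤ n → f i ∈ A) := by
  intro a b p
  induction p with
  | @nil u =>
    intro hs
    exact ⟨0, fun _ => u, ⟨rfl, rfl, by omega, by omega⟩,
      fun i _ => hs u (by simp)⟩
  | @cons a c b h q ih =>
    intro hs
    obtain ⟨n, f, ⟨h0, hn, hadj, _⟩, hall⟩ := ih (fun z hz => hs z (by simp [hz]))
    refine ⟨n+1, fun i => if i = 0 then a else f (i-1), ⟨by simp, ?_, ?_, ?_⟩, ?_⟩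
    · simp [hn]
    · intro i hi
      by_cases hi0 : i = 0
      · subst hi0; simpa [h0] using h
      · have e1 : i - 1 + 1 = i - 1 + 1 := rfl
        simp only [if_neg hi0, if_neg (by omega : ¬ i + 1 = 0)]
        have : i - 1 + 1 = i + 1 - 1 := by omega
        rw [show i + 1 - 1 = (i-1) + 1 by omega]
        exact hadj (i-1) (by omega)
    · intro i hi0 hin
      simp only [if_neg (by omega : ¬ i = 0)]
      exact hall (i-1) (by omega)
    · intro i hi
      by_cases hi0 : i = 0
      · subst hi0; simpa using hs a (by simp)
      · simp only [if_neg hi0]; exact hall (i-1) (by omega)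

lemma chain_extend {A : Set V} {u1 u2 a b : V} (h1 : G.Adj u1 a) (h2 : G.Adj b u2)
    (p : G.Walk a b) (hs : ∀ z ∈ p.support, z ∈ A) :
    ∃ n f, IsChn G u1 u2 A n f := by
  obtain ⟨n, f, ⟨h0, hn, hadj, _⟩, hall⟩ := chain_of_walk p hs
  refine ⟨n+2, fun i => if i = 0 then u1 else if i ≤ n+1 then f (i-1) else u2,
    by simp, ?_, ?_, ?_⟩
  · simp only [if_neg (by omega : ¬ n+2 = 0), if_neg (by omega : ¬ n+2 ≤ n+1)]
  · intro i hi
    by_cases hi0 : i = 0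
    · subst hi0; simpa [h0] using h1
    · by_cases hi1 : i ≤ n
      · simp only [if_neg hi0, if_neg (by omega : ¬ i + 1 = 0),
          if_pos (by omega : i ≤ n+1), if_pos (by omega : i+1 ≤ n+1)]
        rw [show i + 1 - 1 = (i-1) + 1 by omega]
        exact hadj (i-1) (by omega)
      · have hieq : i = n+1 := by omega
        subst hieq
        simp only [if_neg hi0, if_pos (le_refl _), if_neg (by omega : ¬ n+1+1 = 0),
          if_neg (by omega : ¬ n+1+1 ≤ n+1)]
        rw [show n + 1 - 1 = n by omega, hn]
        exact h2
  · intro i hi0 hin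
    simp only [if_neg (by omega : ¬ i = 0), if_pos (by omega : i ≤ n+1)]
    exact hall (i-1) (by omega)



lemma chain_cut_eq {A : Set V} {u1 u2 : V} {n : ℕ} {f : ℕ → V}
    (hc : IsChn G u1 u2 A n f) {i j : ℕ}
    (hij : i < j) (hj : j ≤ n) (heq : f i = f j) :
    ∃ g, IsChn G u1 u2 A (n - (j - i)) g := by
  obtain ⟨h0, hn, hadj, hA⟩ := hc
  refine ⟨fun l => if l ≤ i then f l else f (l + (j - i)), ?_, ?_, ?_, ?_⟩
  · simpa using h0
  · dsimp only
    by_cases hni : n - (j-i) ≤ i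
    · have hji : j = n := by omega
      have hidx : n - (j - i) = i := by omega
      rw [if_pos hni, hidx, heq, hji, hn]
    · rw [if_neg hni, show n - (j-i) + (j-i) = n by omega, hn]
  · intro l hl
    dsimp only
    by_cases h1 : l + 1 ≤ i
    · rw [if_pos (by omega), if_pos h1]; exact hadj l (by omega)
    · by_cases h2 : l ≤ i
      · have hli : l = i := by omega
        rw [if_pos h2, if_neg (by omega), show l + 1 + (j - i) = j + 1 by omega,
          hli, heq]
        exact hadj j (by omega)
      · rw [if_neg h2, if_neg (by omega),
          show l + 1 + (j-i) = (l + (j-i)) + 1 by omega]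
        exact hadj _ (by omega)
  · intro l hl0 hln
    dsimp only
    by_cases h2 : l ≤ i
    · rw [if_pos h2]; exact hA l hl0 (by omega)
    · rw [if_neg h2]; exact hA _ (by omega) (by omega)

lemma chain_cut_adj {A : Set V} {u1 u2 : V} {n : ℕ} {f : ℕ → V}
    (hc : IsChn G u1 u2 A n f) {i j : ℕ}
    (hij : i + 1 < j) (hj : j ≤ n) (hadj' : G.Adj (f i) (f j)) :
    ∃ g, IsChn G u1 u2 A (n - (j - i - 1)) g := by
  obtain ⟨h0, hn, hadj, hA⟩ := hc
  refine ⟨fun l => if l ≤ i then f l else f (l - 1 + (j - i)), ?_, ?_, ?_, ?_⟩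
  · simpa using h0
  · dsimp only
    rw [if_neg (by omega), show n - (j - i - 1) - 1 + (j - i) = n by omega, hn]
  · intro l hl
    dsimp only
    by_cases h1 : l + 1 ≤ i
    · rw [if_pos (by omega), if_pos h1]; exact hadj l (by omega)
    · by_cases h2 : l ≤ i
      · have hli : l = i := by omega
        rw [if_pos h2, if_neg (by omega), show l + 1 - 1 + (j - i) = j by omega, hli]
        exact hadj'
      · rw [if_neg h2, if_neg (by omega),
          show l + 1 - 1 + (j-i) = (l - 1 + (j-i)) + 1 by omega]
        exact hadj _ (by omega)
  · intro l hl0 hln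
    dsimp only
    by_cases h2 : l ≤ i
    · rw [if_pos h2]; exact hA l hl0 (by omega)
    · rw [if_neg h2]; exact hA _ (by omega) (by omega)

lemma minimal_chain {A : Set V} {u1 u2 : V} (hne : u1 ≠ u2) (hnadj : ¬ G.Adj u1 u2)
    (hex : ∃ n f, IsChn G u1 u2 A n f) :
    ∃ n f, IsChn G u1 u2 A n f ∧ 2 ≤ n ∧
      (∀ i, i ≤ n → ∀ j, j ≤ n → i < j → f i ≠ f j) ∧
      (∀ i j, i ≤ n → j ≤ n → i + 1 < j → ¬ G.Adj (f i) (f j)) := by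
  classical
  have hex' : ∃ n, ∃ f, IsChn G u1 u2 A n f := hex
  let n := Nat.find hex'
  obtain ⟨f, hf⟩ : ∃ f, IsChn G u1 u2 A n f := Nat.find_spec hex'
  have hmin : ∀ m, m < n → ¬ ∃ f, IsChn G u1 u2 A m f := fun m hm => Nat.find_min hex' hm
  have hn2 : 2 ≤ n := by
    rcases Nat.lt_or_ge n 2 with h | h
    · interval_cases n
      · exact absurd (hf.1.symm.trans hf.2.1) hne
      · exact absurd (hf.1 ▸ hf.2.1 ▸ hf.2.2.1 0 (by omega)) hnadj
    · exact h
  refine ⟨n, f, hf, hn2, ?_, ?_⟩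
  · intro i hi j hj hij
    by_contra heq
    obtain ⟨g, hg⟩ := chain_cut_eq hf hij hj heq
    exact hmin _ (by omega) ⟨g, hg⟩
  · intro i j hi hj hij
    by_contra hadj'
    obtain ⟨g, hg⟩ := chain_cut_adj hf hij hj hadj'
    exact hmin _ (by omega) ⟨g, hg⟩




variable {k : ℕ} {x : ℕ → V}

def Hxeq (k : ℕ) (x : ℕ → V) : Prop := ∀ i j : ℕ, x i = x j ↔ i % k = j % k
def Hxadj (G : SimpleGraph V) (k : ℕ) (x : ℕ → V) : Prop :=
  ∀ i j : ℕ, G.Adj (x i) (x j) ↔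
    (¬ i % k = j % k ∧ ¬ (i+1) % k = j % k ∧ ¬ (j+1) % k = i % k)

lemma mod_addl (hk : 7 ≤ k) (n a b : ℕ) (ha : a ≤ 6) (hb : b ≤ 6) :
    ((n+a) % k = (n+b) % k) ↔ a = b := by
  constructor
  · intro h
    have h2 : a ≡ b [MOD k] := Nat.ModEq.add_left_cancel' n h
    have ha' := Nat.mod_eq_of_lt (show a < k by omega)
    have hb' := Nat.mod_eq_of_lt (show b < k by omega)
    unfold Nat.ModEq at h2; omega
  · rintro rfl; rfl

lemma xE (hk : 7 ≤ k) (hxeq : Hxeq k x) {n a b : ℕ} (ha : a ≤ 6) (hb : b ≤ 6)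
    (h : a ≠ b) : x (n+a) ≠ x (n+b) :=
  fun hcon => h ((mod_addl hk n a b ha hb).mp ((hxeq _ _).mp hcon))

lemma xA (hk : 7 ≤ k) (hxadj : Hxadj G k x) {n a b : ℕ} (ha : a ≤ 5) (hb : b ≤ 5)
    (h1 : a ≠ b) (h2 : a+1 ≠ b) (h3 : b+1 ≠ a) : G.Adj (x (n+a)) (x (n+b)) := by
  rw [hxadj, show n + a + 1 = n + (a+1) by omega, show n + b + 1 = n + (b+1) by omega,
    mod_addl hk n a b (by omega) (by omega), mod_addl hk n (a+1) b (by omega) (by omega),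
    mod_addl hk n (b+1) a (by omega) (by omega)]
  exact ⟨h1, h2, h3⟩

lemma xNA (hk : 7 ≤ k) (hxadj : Hxadj G k x) {n a b : ℕ} (ha : a ≤ 5) (hb : b ≤ 5)
    (h : a = b ∨ a+1 = b ∨ b+1 = a) : ¬ G.Adj (x (n+a)) (x (n+b)) := by
  rw [hxadj, show n + a + 1 = n + (a+1) by omega, show n + b + 1 = n + (b+1) by omega,
    mod_addl hk n a b (by omega) (by omega), mod_addl hk n (a+1) b (by omega) (by omega),
    mod_addl hk n (b+1) a (by omega) (by omega)]
  tauto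

lemma xshift (hxeq : Hxeq k x) (n : ℕ) : x (n + k) = x n :=
  (hxeq _ _).mpr (Nat.add_mod_right n k)

/-- L1 : if u has a neighbour x j but misses x (j+1), x (j+2), we get a dart. -/
lemma L1 (hk : 7 ≤ k) (hxeq : Hxeq k x) (hxadj : Hxadj G k x)
    (hdart : IsEmpty (dartGraph ↪g G)) {u : V} (hu : ∀ n, u ≠ x n)
    (j : ℕ) (h0 : G.Adj u (x j)) (h1 : ¬ G.Adj u (x (j+1))) (h2 : ¬ G.Adj u (x (j+2))) :
    False := by
  by_cases h4 : G.Adj u (x (j+4))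
  · -- D1 = (x j, u, x (j+2), x (j+4), x (j+1))
    exact mkDart hdart h0.symm
      (xA hk hxadj (n := j) (a := 0) (b := 2) (by omega) (by omega) (by omega) (by omega) (by omega))
      (xA hk hxadj (n := j) (a := 0) (b := 4) (by omega) (by omega) (by omega) (by omega) (by omega))
      h4
      (xA hk hxadj (n := j) (a := 2) (b := 4) (by omega) (by omega) (by omega) (by omega) (by omega))
      (xA hk hxadj (n := j) (a := 4) (b := 1) (by omega) (by omega) (by omega) (by omega) (by omega))
      h2
      (xNA hk hxadj (n := j) (a := 0) (b := 1) (by omega) (by omega) (by omega))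
      h1
      (xNA hk hxadj (n := j) (a := 2) (b := 1) (by omega) (by omega) (by omega))
      (hu (j+2))
      (xE hk hxeq (n := j) (a := 0) (b := 1) (by omega) (by omega) (by omega))
      (hu (j+1))
      (xE hk hxeq (n := j) (a := 2) (b := 1) (by omega) (by omega) (by omega))
  · by_cases h5 : G.Adj u (x (j+5))
    · -- D2 = (x j, u, x (j+2), x (j+5), x (j+1))
      exact mkDart hdart h0.symm
        (xA hk hxadj (n := j) (a := 0) (b := 2) (by omega) (by omega) (by omega) (by omega) (by omega))
        (xA hk hxadj (n := j) (a := 0) (b := 5) (by omega) (by omega) (by omega) (by omega) (by omega))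
        h5
        (xA hk hxadj (n := j) (a := 2) (b := 5) (by omega) (by omega) (by omega) (by omega) (by omega))
        (xA hk hxadj (n := j) (a := 5) (b := 1) (by omega) (by omega) (by omega) (by omega) (by omega))
        h2
        (xNA hk hxadj (n := j) (a := 0) (b := 1) (by omega) (by omega) (by omega))
        h1
        (xNA hk hxadj (n := j) (a := 2) (b := 1) (by omega) (by omega) (by omega))
        (hu (j+2))
        (xE hk hxeq (n := j) (a := 0) (b := 1) (by omega) (by omega) (by omega))
        (hu (j+1))
        (xE hk hxeq (n := j) (a := 2) (b := 1) (by omega) (by omega) (by omega))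
    · -- D6 = (x (j+2), x (j+4), x (j+5), x j, u)
      exact mkDart hdart
        (xA hk hxadj (n := j) (a := 2) (b := 4) (by omega) (by omega) (by omega) (by omega) (by omega))
        (xA hk hxadj (n := j) (a := 2) (b := 5) (by omega) (by omega) (by omega) (by omega) (by omega))
        (xA hk hxadj (n := j) (a := 2) (b := 0) (by omega) (by omega) (by omega) (by omega) (by omega))
        (xA hk hxadj (n := j) (a := 4) (b := 0) (by omega) (by omega) (by omega) (by omega) (by omega))
        (xA hk hxadj (n := j) (a := 5) (b := 0) (by omega) (by omega) (by omega) (by omega) (by omega))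
        h0.symm
        (xNA hk hxadj (n := j) (a := 4) (b := 5) (by omega) (by omega) (by omega))
        (fun h => h2 h.symm)
        (fun h => h4 h.symm)
        (fun h => h5 h.symm)
        (xE hk hxeq (n := j) (a := 4) (b := 5) (by omega) (by omega) (by omega))
        (fun h => hu (j+2) h.symm)
        (fun h => hu (j+4) h.symm)
        (fun h => hu (j+5) h.symm)

/-- claim A: a vertex outside H with a neighbour in H cannot miss two consecutive. -/
lemma claimA (hk : 7 ≤ k) (hxeq : Hxeq k x) (hxadj : Hxadj G k x)
    (hdart : IsEmpty (dartGraph ↪g G)) {u : V} (hu : ∀ n, u ≠ x n)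
    (hnbr : ∃ n, G.Adj u (x n)) :
    ∀ i, G.Adj u (x i) ∨ G.Adj u (x (i+1)) := by
  intro i
  by_contra hcon
  push_neg at hcon
  obtain ⟨hc1, hc2⟩ := hcon
  have key : ∀ m : ℕ, ¬ G.Adj u (x (i + m*(k-1))) ∧ ¬ G.Adj u (x (i + m*(k-1) + 1)) := by
    intro m
    induction m with
    | zero => simpa using ⟨hc1, hc2⟩
    | succ m ih =>
      set b := i + m*(k-1) with hb
      have hidx1 : i + (m+1)*(k-1) = b + (k-1) := by
        have hst : (m+1)*(k-1) = m*(k-1) + (k-1) := by ring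
        omega
      have hx1 : x (b + (k-1) + 1) = x b := by
        rw [show b + (k-1) + 1 = b + k by omega]; exact xshift hxeq b
      have hx2 : x (b + (k-1) + 2) = x (b+1) := by
        rw [show b + (k-1) + 2 = (b+1) + k by omega]; exact xshift hxeq (b+1)
      constructor
      · rw [hidx1]
        intro hAdj
        exact L1 hk hxeq hxadj hdart hu (b + (k-1)) hAdj
          (by rw [hx1]; exact ih.1) (by rw [hx2]; exact ih.2)
      · rw [show i + (m+1)*(k-1) + 1 = b + (k-1) + 1 by omega, hx1]
        exact ih.1
  obtain ⟨a0, ha0⟩ := hnbr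
  obtain ⟨c, hc⟩ : ∃ c, k * c + a0 % k = a0 := ⟨a0 / k, Nat.div_add_mod a0 k⟩
  set m := i + (k - a0 % k) with hm
  have h7 : a0 % k < k := Nat.mod_lt _ (by omega)
  have hmul : (c+1)*k = c*k + k := by ring
  have hmul2 : k * c = c * k := by ring
  have heq1 : a0 + m = i + (c+1)*k := by omega
  have hB : (a0 + m) % k = i % k := by
    rw [heq1]; exact Nat.add_mul_mod_self_right i (c+1) k
  have hmk : m * k = m * (k-1) + m := by
    have h3 : m * k = m * (k - 1) + m * 1 := by
      rw [← Nat.mul_add]; congr 1; omega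
    omega
  have hA : (i + m*(k-1) + m) % k = i % k := by
    rw [show i + m*(k-1) + m = i + m * k by omega]
    exact Nat.add_mul_mod_self_right i m k
  have hfin : (i + m*(k-1)) % k = a0 % k := by
    have h5 : (i + m*(k-1) + m) % k = (a0 + m) % k := by rw [hA, hB]
    have h6 : i + m*(k-1) ≡ a0 [MOD k] := Nat.ModEq.add_right_cancel' m h5
    exact h6
  have hxx : x (i + m*(k-1)) = x a0 := (hxeq _ _).mpr hfin
  rw [← hxx] at ha0
  exact (key m).1 ha0

/-- claim B: a contact vertex cannot see two consecutive. -/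
lemma claimB (hk : 7 ≤ k) (hxeq : Hxeq k x) (hxadj : Hxadj G k x)
    (hdart : IsEmpty (dartGraph ↪g G)) {u w : V} (hu : ∀ n, u ≠ x n)
    (hnbr : ∃ n, G.Adj u (x n))
    (hw : G.Adj u w) (hwA : ∀ n, ¬ G.Adj w (x n)) (hwS : ∀ n, w ≠ x n) :
    ∀ i, ¬ (G.Adj u (x i) ∧ G.Adj u (x (i+1))) := by
  intro i ⟨hi0, hi1⟩
  have h34 := claimA hk hxeq hxadj hdart hu hnbr (i+3)
  rw [show i + 3 + 1 = i + 4 by omega] at h34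
  rcases h34 with h3 | h3
  · -- dart (x (i+3), x i, x (i+1), u, w)
    exact mkDart hdart
      (xA hk hxadj (n := i) (a := 3) (b := 0) (by omega) (by omega) (by omega) (by omega) (by omega))
      (xA hk hxadj (n := i) (a := 3) (b := 1) (by omega) (by omega) (by omega) (by omega) (by omega))
      h3.symm hi0.symm hi1.symm hw
      (xNA hk hxadj (n := i) (a := 0) (b := 1) (by omega) (by omega) (by omega))
      (fun h => hwA (i+3) h.symm)
      (fun h => hwA i h.symm)
      (fun h => hwA (i+1) h.symm)
      (xE hk hxeq (n := i) (a := 0) (b := 1) (by omega) (by omega) (by omega))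
      (fun h => hwS (i+3) h.symm)
      (fun h => hwS i h.symm)
      (fun h => hwS (i+1) h.symm)
  · exact mkDart hdart
      (xA hk hxadj (n := i) (a := 4) (b := 0) (by omega) (by omega) (by omega) (by omega) (by omega))
      (xA hk hxadj (n := i) (a := 4) (b := 1) (by omega) (by omega) (by omega) (by omega) (by omega))
      h3.symm hi0.symm hi1.symm hw
      (xNA hk hxadj (n := i) (a := 0) (b := 1) (by omega) (by omega) (by omega))
      (fun h => hwA (i+4) h.symm)
      (fun h => hwA i h.symm)
      (fun h => hwA (i+1) h.symm)
      (xE hk hxeq (n := i) (a := 0) (b := 1) (by omega) (by omega) (by omega))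
      (fun h => hwS (i+4) h.symm)
      (fun h => hwS i h.symm)
      (fun h => hwS (i+1) h.symm)




def cyc (f : ℕ → V) (n : ℕ) (p q : V) : ℕ → V :=
  fun i => if i ≤ n then f i else if i = n+1 then p else q

lemma cyc_le {f : ℕ → V} {n : ℕ} {p q : V} {i : ℕ} (h : i ≤ n) : cyc f n p q i = f i := by
  simp only [cyc, if_pos h]
lemma cyc_n1 {f : ℕ → V} {n : ℕ} {p q : V} : cyc f n p q (n+1) = p := by
  simp [cyc]
lemma cyc_n2 {f : ℕ → V} {n : ℕ} {p q : V} : cyc f n p q (n+2) = q := by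
  simp only [cyc, if_neg (by omega : ¬ n+2 ≤ n), if_neg (by omega : ¬ n+2 = n+1)]

lemma cross_hole (hhole : ∀ m : ℕ, 5 ≤ m → IsEmpty (cycleGraph m ↪g G))
    {u1 u2 p q : V} {A : Set V}
    (hAprop : ∀ y ∈ A, (∀ z : V, z = p ∨ z = q → ¬ G.Adj y z ∧ y ≠ z))
    (hu1p : G.Adj u1 q) (hu1q : ¬ G.Adj u1 p) (hu1np : u1 ≠ p) (hu1nq : u1 ≠ q)
    (hu2p : G.Adj u2 p) (hu2q : ¬ G.Adj u2 q) (hu2np : u2 ≠ p) (hu2nq : u2 ≠ q)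
    (hpq : G.Adj p q)
    (hne : u1 ≠ u2) (hnadj : ¬ G.Adj u1 u2)
    (hex : ∃ n f, IsChn G u1 u2 A n f) : False := by
  obtain ⟨n, f, ⟨h0, hn, hadje, hAint⟩, hn2, hinj, hnochord⟩ :=
    minimal_chain hne hnadj hex
  set N := n + 3 with hN
  -- interior facts
  have hint : ∀ i, 0 < i → i < n → (∀ z : V, z = p ∨ z = q → ¬ G.Adj (f i) z ∧ f i ≠ z) :=
    fun i h1 h2 => hAprop (f i) (hAint i h1 h2)
  have key : ∀ i j, i < j → j < N →
      (G.Adj (cyc f n p q i) (cyc f n p q j) ↔ ((i+1) % N = j ∨ (j+1) % N = i)) := by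
    intro i j hij hj
    have hm1 := mod_two_cases (i+1) N (by omega)
    have hm2 := mod_two_cases (j+1) N (by omega)
    rcases (by omega : j ≤ n ∨ j = n+1 ∨ j = n+2) with hc | hc | hc
    · rw [cyc_le (by omega), cyc_le hc]
      constructor
      · intro hAdj
        by_cases h : j = i + 1
        · left; omega
        · exact absurd hAdj (hnochord i j (by omega) (by omega) (by omega))
      · intro h
        have hj1 : j = i + 1 := by omega
        subst hj1
        exact hadje i (by omega)
    · subst hc
      rw [cyc_le (by omega : i ≤ n), cyc_n1]
      rcases (by omega : i = n ∨ i < n) with hi | hi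
      · have hfi : f i = u2 := by rw [hi, hn]
        rw [hfi]
        refine iff_of_true hu2p (by left; omega)
      · refine iff_of_false ?_ (by omega)
        rcases (by omega : i = 0 ∨ 0 < i) with hi0 | hi0
        · rw [hi0, h0]; exact hu1q
        · exact (hint i hi0 hi p (Or.inl rfl)).1
    · subst hc
      rcases (by omega : i ≤ n ∨ i = n+1) with hi | hi
      · rw [cyc_le hi, cyc_n2]
        have hms : (n + 2 + 1) % N = 0 := by
          rw [hN]; exact Nat.mod_self (n+3)
        rcases (by omega : i = 0 ∨ i = n ∨ (0 < i ∧ i < n)) with hi0 | hi0 | hi0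
        · have hfi : f i = u1 := by rw [hi0, h0]
          rw [hfi]
          refine iff_of_true hu1p ?_
          right
          omega
        · have hfi : f i = u2 := by rw [hi0, hn]
          rw [hfi]
          exact iff_of_false hu2q (by omega)
        · exact iff_of_false (hint i hi0.1 hi0.2 q (Or.inr rfl)).1 (by omega)
      · have hci : cyc f n p q i = p := by rw [hi]; exact cyc_n1
        rw [hci, cyc_n2]
        exact iff_of_true hpq (by left; omega)
  have keyne : ∀ i j, i < j → j < N → cyc f n p q i ≠ cyc f n p q j := by
    intro i j hij hj
    rcases (by omega : j ≤ n ∨ j = n+1 ∨ j = n+2) with hc | hc | hc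
    · rw [cyc_le (by omega), cyc_le hc]
      exact hinj i (by omega) j (by omega) hij
    · subst hc
      rw [cyc_le (by omega : i ≤ n), cyc_n1]
      rcases (by omega : i = 0 ∨ i = n ∨ (0 < i ∧ i < n)) with hi | hi | hi
      · rw [hi, h0]; exact hu1np
      · rw [hi, hn]; exact hu2np
      · exact (hint i hi.1 hi.2 p (Or.inl rfl)).2
    · subst hc
      rcases (by omega : i ≤ n ∨ i = n+1) with hi | hi
      · rw [cyc_le hi, cyc_n2]
        rcases (by omega : i = 0 ∨ i = n ∨ (0 < i ∧ i < n)) with hi0 | hi0 | hi0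
        · rw [hi0, h0]; exact hu1nq
        · rw [hi0, hn]; exact hu2nq
        · exact (hint i hi0.1 hi0.2 q (Or.inr rfl)).2
      · rw [hi, cyc_n1, cyc_n2]
        exact fun h => (G.irrefl (h ▸ hpq))
  refine mkCycle hhole (by omega : 5 ≤ N) (cyc f n p q) ?_ ?_
  · intro i hi j hj hijeq
    rcases Nat.lt_trichotomy i j with h | h | h
    · exact absurd hijeq (keyne i j h hj)
    · exact h
    · exact absurd hijeq.symm (keyne j i h hi)
  · intro i hi j hj
    rcases Nat.lt_trichotomy i j with h | h | h
    · exact key i j h hj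
    · subst h
      refine iff_of_false (G.irrefl) ?_
      have := mod_two_cases (i+1) N (by omega)
      omega
    · rw [adj_comm, or_comm]
      exact key j i h hi

end S5

theorem stmt5 {V : Type*} [Fintype V] (G : SimpleGraph V)
    (hconn : G.Connected)
    (hhole : ∀ k : ℕ, 5 ≤ k → IsEmpty (cycleGraph k ↪g G))
    (hdart : IsEmpty (dartGraph ↪g G))
    (hatom : ¬ HasCliqueCutset G)
    (v : V) (k : ℕ) (hk : 7 ≤ k) :
    IsEmpty ((cycleGraph k)ᶜ ↪g G.induce (vertexAnti G v)) := by
  constructor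
  intro e
  obtain ⟨m, rfl⟩ : ∃ m, k = m + 7 := ⟨k - 7, by omega⟩
  set K := m + 7 with hK
  have hk7 : 7 ≤ K := by omega
  have hKpos : 0 < K := by omega
  -- the vertices of the anticycle
  obtain ⟨x, hxeq, hxadj, hxv⟩ :
      ∃ x : ℕ → V, S5.Hxeq K x ∧ S5.Hxadj G K x ∧
        (∀ n, x n ≠ v ∧ ¬ G.Adj v (x n)) := by
    refine ⟨fun n => (e ⟨n % K, Nat.mod_lt _ hKpos⟩ : V), ?_, ?_, ?_⟩
    · intro i j
      constructor
      · intro h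
        have h2 := e.injective (Subtype.coe_injective h)
        simpa [Fin.mk.injEq] using h2
      · intro h
        have hfin : (⟨i % K, Nat.mod_lt _ hKpos⟩ : Fin K) = ⟨j % K, Nat.mod_lt _ hKpos⟩ :=
          Fin.mk_eq_mk.mpr h
        exact congrArg (fun t : Fin K => (e t : V)) hfin
    · intro i j
      have h1 : G.Adj (e ⟨i % K, Nat.mod_lt _ hKpos⟩ : V)
          (e ⟨j % K, Nat.mod_lt _ hKpos⟩ : V) ↔
          ((cycleGraph K)ᶜ).Adj ⟨i % K, Nat.mod_lt _ hKpos⟩ ⟨j % K, Nat.mod_lt _ hKpos⟩ :=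
        e.map_adj_iff
      rw [h1, SimpleGraph.compl_adj, S5.cycAdj (by omega)]
      have e1 : ((i % K) + 1) % K = (i + 1) % K := Nat.mod_add_mod i K 1 ▸ rfl
      have e2 : ((j % K) + 1) % K = (j + 1) % K := Nat.mod_add_mod j K 1 ▸ rfl
      constructor
      · rintro ⟨hne, hnor⟩
        refine ⟨fun h => hne (Fin.ext h), fun h => hnor ?_, fun h => hnor ?_⟩
        · left; show ((i % K) + 1) % K = j % K; omega
        · right; show ((j % K) + 1) % K = i % K; omega
      · rintro ⟨h1', h2', h3'⟩
        refine ⟨fun h => h1' (by simpa [Fin.mk.injEq] using h), ?_⟩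
        rintro (h | h)
        · exact h2' (by rw [← e1]; exact h)
        · exact h3' (by rw [← e2]; exact h)
    · intro n
      exact ⟨(e ⟨n % K, Nat.mod_lt _ hKpos⟩).prop.1, (e ⟨n % K, Nat.mod_lt _ hKpos⟩).prop.2⟩
  -- the anti-neighbourhood of the anticycle and the contact set
  set Aset : Set V := {y | (∀ n, ¬ G.Adj y (x n)) ∧ (∀ n, y ≠ x n)} with hAset
  set C : Set V := {u | (∃ n, G.Adj u (x n)) ∧
      (∃ w, S5.InA G Aset v w ∧ G.Adj u w) ∧ (∀ n, u ≠ x n)} with hC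
  have hvA : v ∈ Aset := ⟨fun n h => (hxv n).2 h, fun n h => (hxv n).1 h.symm⟩
  have claims : ∀ u, u ∈ C →
      (∀ i, G.Adj u (x i) ∨ G.Adj u (x (i+1))) ∧
      (∀ i, ¬ (G.Adj u (x i) ∧ G.Adj u (x (i+1)))) := by
    rintro u ⟨hnbr, ⟨w, hwInA, hwadj⟩, huS⟩
    have hwA := S5.InA.mem hwInA
    exact ⟨S5.claimA hk7 hxeq hxadj hdart huS hnbr,
           S5.claimB hk7 hxeq hxadj hdart huS hnbr hwadj hwA.1 hwA.2⟩
  have hclique : G.IsClique C := by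
    intro u1 hu1C u2 hu2C hne12
    by_contra hnadj
    obtain ⟨A1, B1⟩ := claims u1 hu1C
    obtain ⟨A2, B2⟩ := claims u2 hu2C
    obtain ⟨hnbr1, ⟨w1, hw1InA, hw1adj⟩, hS1⟩ := hu1C
    obtain ⟨hnbr2, ⟨w2, hw2InA, hw2adj⟩, hS2⟩ := hu2C
    by_cases hsame : ∃ n, G.Adj u1 (x n) ∧ G.Adj u2 (x n)
    · -- same class: a dart
      obtain ⟨n, hn1, hn2⟩ := hsame
      set nb := n + (K - 1) with hnb
      have hx1 : x (nb+1) = x n := by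
        rw [show nb + 1 = n + K by omega]
        exact S5.xshift hxeq n
      have hx3 : x (nb+3) = x (n+2) := by
        rw [show nb + 3 = (n+2) + K by omega]
        exact S5.xshift hxeq (n+2)
      have h1n1 : ¬ G.Adj u1 (x (n+1)) := fun h => B1 n ⟨hn1, h⟩
      have h1n2 : G.Adj u1 (x (n+2)) := (A1 (n+1)).resolve_left h1n1
      have h2n1 : ¬ G.Adj u2 (x (n+1)) := fun h => B2 n ⟨hn2, h⟩
      have h2n2 : G.Adj u2 (x (n+2)) := (A2 (n+1)).resolve_left h2n1
      have h1nb : ¬ G.Adj u1 (x nb) := fun h => B1 nb ⟨h, by rw [hx1]; exact hn1⟩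
      have h2nb : ¬ G.Adj u2 (x nb) := fun h => B2 nb ⟨h, by rw [hx1]; exact hn2⟩
      exact S5.mkDart hdart
        (by rw [hx1]; exact hn1.symm)
        (by rw [hx1]; exact hn2.symm)
        (S5.xA hk7 hxadj (n := nb) (a := 1) (b := 3)
          (by omega) (by omega) (by omega) (by omega) (by omega))
        (by rw [hx3]; exact h1n2)
        (by rw [hx3]; exact h2n2)
        (S5.xA hk7 hxadj (n := nb) (a := 3) (b := 0)
          (by omega) (by omega) (by omega) (by omega) (by omega))
        hnadj
        (S5.xNA hk7 hxadj (n := nb) (a := 1) (b := 0) (by omega) (by omega) (by omega))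
        h1nb h2nb hne12
        (S5.xE hk7 hxeq (n := nb) (a := 1) (b := 0) (by omega) (by omega) (by omega))
        (hS1 nb) (hS2 nb)
    · -- different classes: a long hole
      obtain ⟨j0, hj0⟩ := hnbr1
      have h20 : ¬ G.Adj u2 (x j0) := fun h => hsame ⟨j0, hj0, h⟩
      have h21 : G.Adj u2 (x (j0+1)) := (A2 j0).resolve_left h20
      have h22 : ¬ G.Adj u2 (x (j0+2)) := fun h => B2 (j0+1) ⟨h21, h⟩
      have h23 : G.Adj u2 (x (j0+3)) := (A2 (j0+2)).resolve_left h22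
      have h11 : ¬ G.Adj u1 (x (j0+1)) := fun h => B1 j0 ⟨hj0, h⟩
      have h12 : G.Adj u1 (x (j0+2)) := (A1 (j0+1)).resolve_left h11
      have h13 : ¬ G.Adj u1 (x (j0+3)) := fun h => B1 (j0+2) ⟨h12, h⟩
      obtain ⟨p1, hp1⟩ := hw1InA
      obtain ⟨p2, hp2⟩ := hw2InA
      have hmid : ∀ z ∈ (p1.reverse.append p2).support, z ∈ Aset := by
        intro z hz
        rw [SimpleGraph.Walk.mem_support_append_iff] at hz
        rcases hz with hz | hz
        · rw [SimpleGraph.Walk.support_reverse, List.mem_reverse] at hz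
          exact hp1 z hz
        · exact hp2 z hz
      refine S5.cross_hole hhole (p := x (j0+3)) (q := x j0) (A := Aset)
        ?_ hj0 h13 (hS1 (j0+3)) (hS1 j0) h23 h20 (hS2 (j0+3)) (hS2 j0)
        (S5.xA hk7 hxadj (n := j0) (a := 3) (b := 0)
          (by omega) (by omega) (by omega) (by omega) (by omega))
        hne12 hnadj
        (S5.chain_extend hw1adj hw2adj.symm (p1.reverse.append p2) hmid)
      rintro y hy z (rfl | rfl)
      · exact ⟨hy.1 (j0+3), hy.2 (j0+3)⟩
      · exact ⟨hy.1 j0, hy.2 j0⟩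
  -- C is a clique cutset, contradiction
  apply hatom
  refine ⟨C, hclique, ?_⟩
  intro hpre
  have hvmem : v ∈ Cᶜ := by
    intro hvC
    obtain ⟨⟨n, hn⟩, -, -⟩ := hvC
    exact (hxv n).2 hn
  have hx0mem : x 0 ∈ Cᶜ := by
    intro hc
    exact hc.2.2 0 rfl
  obtain ⟨p, hp⟩ := S5.walk_out (hpre ⟨v, hvmem⟩ ⟨x 0, hx0mem⟩)
  have hx0A : x 0 ∉ Aset := fun h => h.2 0 rfl
  have hInAv : S5.InA G Aset v v := by
    refine ⟨SimpleGraph.Walk.nil, ?_⟩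
    intro z hz
    simp only [SimpleGraph.Walk.support_nil, List.mem_singleton] at hz
    subst hz
    exact hvA
  obtain ⟨u, w, hwInA, hadjwu, huA, husupp⟩ := S5.exit p hInAv hx0A
  by_cases hcase : ∃ n, u = x n
  · obtain ⟨n, rfl⟩ := hcase
    exact (S5.InA.mem hwInA).1 n hadjwu
  · have huS : ∀ n, u ≠ x n := fun n h => hcase ⟨n, h⟩
    have hunbr : ∃ n, G.Adj u (x n) := by
      by_contra hno
      push_neg at hno
      exact huA ⟨hno, huS⟩
    exact (hp u husupp) ⟨hunbr, ⟨w, hwInA, hadjwu.symm⟩, huS⟩
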